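/- arXiv:2105.06313 — 4 statements merged into one kernel-verified Lean document; each statement's English description precedes it below -/
import Mathlib

section
/- If all agents have the same working partition (W_i = W_j for all i, j), then at every state x, the event E(x) = {x' : f_i(x') = f_i(x) for all i} is common knowledge at x, i.e., the block of the meet of the information partitions containing x is a subset of E(x). -/
/-- The block of the partition (setoid) `P` containing `x`. -/
def blk {X : Type*} (P : Setoid X) (x : X) : Set X := {y | P x y}

/-- The message sent at state `x` by an agent with information `P`,
given the message function `f`. -/
def msg {X A : Type*} (f : Set X → A) (P : Setoid X) (x : X) : A := f (blk P x)

/-- The working partition of `P` induced by the message function `f`: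
two states are equivalent iff the same message is sent at them. -/
def wp {X A : Type*} (f : Set X → A) (P : Setoid X) : Setoid X := Setoid.ker (msg f P)

/-- The sure thing principle: for any nonempty `S` and any partition of `S`
into nonempty blocks all mapped by `f` to `a`, `f S = a`. -/
def STPred {X A : Type*} (f : Set X → A) : Prop :=
  ∀ (S : Set X) (C : Set (Set X)) (a : A), S.Nonempty →
    (∀ B ∈ C, B.Nonempty) → C.PairwiseDisjoint id → ⋃₀ C = S →
    (∀ B ∈ C, f B = a) → f S = a

open scoped Classical in
/- The update function on profiles of partitions induced by the graph `G`:
if `i` has senders, `i` refines her partition by joining (in the refinement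
order: `⊓` in the `Setoid` order, which is the coarsest common refinement)
with the working partitions of all her senders; else her partition stays put.
Note: in the `Setoid` order, smaller = finer, so the paper's coarsening order
`P ≤ Q` ("Q refines P") is `Q ≤ P` here, the paper's join is `⊓`, and the
paper's meet is `⊔`. -/
noncomputable def update {X A I : Type*} (f : Set X → A) (G : I → I → Prop)
    (P : I → Setoid X) (i : I) : Setoid X :=
  if (∃ j, G j i) then ⨅ j ∈ {j | G j i}, (P i ⊓ wp f (P j)) else P i

/-- If all agents have the same working partition, then at every state `x`
the event `E(x) = {x' : fᵢ(x') = fᵢ(x) for all i}` is common knowledge at `x`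
(the block of the meet of the information partitions — `⨆` in the `Setoid` order —
containing `x` is contained in `E(x)`). -/
theorem stmt_2 {X A I : Type*} [Fintype I] [Nonempty I] (f : Set X → A)
    (P : I → Setoid X) (hW : ∀ i j, wp f (P i) = wp f (P j)) :
    ∀ x : X, blk (⨆ i, P i) x ⊆ {x' | ∀ i, msg f (P i) x' = msg f (P i) x} := by
  have hle : ∀ i j : I, P i ≤ wp f (P j) := by
    intro i j
    have : P i ≤ wp f (P i) := by
      intro a b hab
      show msg f (P i) a = msg f (P i) b
      unfold msg blk
      congr 1
      ext y
      exact ⟨fun h => (P i).trans ((P i).symm hab) h, fun h => (P i).trans hab h⟩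
    rw [hW i j] at this
    exact this
  intro x y hy i
  have : (⨆ i, P i) ≤ wp f (P i) := iSup_le fun j => hle j i
  exact (this hy).symm
end

section
/- If f satisfies the sure thing principle and the communication graph G contains a strongly connected, symmetric spanning subgraph, then every fixed point of the update function g is a consensus profile: Fix(g) = Cons(f). -/
lemma blk_eq_of_rel {X : Type*} {P : Setoid X} {x y : X} (h : P x y) :
    blk P x = blk P y := by
  ext z
  exact ⟨fun hz => P.trans' (P.symm' h) hz, fun hz => P.trans' h hz⟩

lemma le_wp_self {X A : Type*} (f : Set X → A) (P : Setoid X) : P ≤ wp f P := by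
  intro x y hxy
  show f (blk P x) = f (blk P y)
  rw [blk_eq_of_rel hxy]

lemma rel_wp_iff {X A : Type*} {f : Set X → A} {P : Setoid X} {x y : X} :
    (wp f P) x y ↔ msg f P x = msg f P y := Iff.rfl

/-- If `P ≤ R ≤ wp f P` then the messages of `R` and `P` coincide, by STP. -/
lemma msg_eq_of_between {X A : Type*} {f : Set X → A} (hstp : STPred f)
    {P R : Setoid X} (hPR : P ≤ R) (hRw : R ≤ wp f P) : msg f R = msg f P := by
  funext x
  have hx : x ∈ blk R x := R.refl' x
  refine hstp (blk R x) {B | ∃ y, R x y ∧ B = blk P y} (msg f P x)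
    ⟨x, hx⟩ ?_ ?_ ?_ ?_
  · rintro B ⟨y, _, rfl⟩; exact ⟨y, P.refl' y⟩
  · rintro B ⟨y, hy, rfl⟩ B' ⟨y', hy', rfl⟩ hne
    refine Set.disjoint_left.2 fun z hz hz' => hne ?_
    simp only [id] at hz hz' ⊢
    exact (blk_eq_of_rel (show P y z from hz)).trans (blk_eq_of_rel (show P y' z from hz')).symm
  · ext z
    constructor
    · rintro ⟨B, ⟨y, hy, rfl⟩, hz⟩
      exact R.trans' hy (hPR hz)
    · intro hz
      exact ⟨blk P z, ⟨z, hz, rfl⟩, P.refl' z⟩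
  · rintro B ⟨y, hy, rfl⟩
    exact (hRw hy).symm

/-- Key lemma: mutual refinement of working partitions forces equal messages. -/
lemma msg_eq_of_mutual {X A : Type*} {f : Set X → A} (hstp : STPred f)
    {P Q : Setoid X} (hPQ : P ≤ wp f Q) (hQP : Q ≤ wp f P) :
    msg f P = msg f Q := by
  have h1 : msg f (P ⊔ Q) = msg f P :=
    msg_eq_of_between hstp le_sup_left (sup_le (le_wp_self f P) hQP)
  have h2 : msg f (P ⊔ Q) = msg f Q := by
    rw [sup_comm]
    exact msg_eq_of_between hstp le_sup_left (sup_le (le_wp_self f Q) hPQ)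
  rw [← h1, h2]

/-- If `f` satisfies the STP and `G` contains a strongly connected,
symmetric spanning subgraph `G'`, then the fixed points of the update `g` are
exactly the consensus profiles: `Fix(g) = Cons(f)`. -/
theorem stmt_9 {X A I : Type*} [Fintype I] (f : Set X → A) (hstp : STPred f)
    (G G' : I → I → Prop) (hsub : ∀ i j, G' i j → G i j)
    (hsymm : ∀ i j, G' i j → G' j i)
    (hconn : ∀ i j : I, i ≠ j → Relation.TransGen G' i j) :
    {P : I → Setoid X | update f G P = P} =
      {P : I → Setoid X | ∀ i j, msg f (P i) = msg f (P j)} := by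
  ext P
  simp only [Set.mem_setOf_eq]
  constructor
  · intro hfix
    -- from fixed point: along any G-edge j → i, P i ≤ wp f (P j)
    have key : ∀ i j, G j i → P i ≤ wp f (P j) := by
      intro i j hji
      have hi : update f G P i = P i := congrFun hfix i
      rw [update, if_pos ⟨j, hji⟩] at hi
      calc P i = ⨅ k ∈ {k | G k i}, (P i ⊓ wp f (P k)) := hi.symm
        _ ≤ P i ⊓ wp f (P j) := iInf_le_of_le j (iInf_le _ hji)
        _ ≤ wp f (P j) := inf_le_right
    have edge : ∀ i j, G' i j → msg f (P i) = msg f (P j) := fun i j hij =>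
      msg_eq_of_mutual hstp (key i j (hsub j i (hsymm i j hij)))
        (key j i (hsub i j hij))
    have tg : ∀ {a b}, Relation.TransGen G' a b → msg f (P a) = msg f (P b) := by
      intro a b h
      induction h with
      | single h => exact edge _ _ h
      | tail _ h ih => exact ih.trans (edge _ _ h)
    intro i j
    rcases eq_or_ne i j with rfl | hne
    · rfl
    · exact tg (hconn i j hne)
  · intro hcons
    funext i
    rw [update]
    split_ifs with h
    · have hwp : ∀ j, wp f (P j) = wp f (P i) := fun j => by
        rw [wp, wp, hcons j i]
      refine le_antisymm ?_ ?_
      · obtain ⟨j, hj⟩ := h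
        exact le_trans (iInf_le_of_le j (iInf_le _ hj)) inf_le_left
      · refine le_iInf₂ fun j hj => le_inf le_rfl ?_
        rw [hwp j]
        exact le_wp_self f (P i)
    · rfl
end

section
/- Any well-ordered chain (with respect to the refinement order) in the lattice of partitions of a set X has cardinality at most |X| (when X is infinite; more precisely a strictly increasing chain of partitions of X has cardinality at most |X| + 1, and at most |X| if X is infinite). -/
/-- Any strictly increasing well-ordered chain of partitions of an
infinite set `X` has cardinality at most `|X|`. -/
theorem stmt_11 {X : Type*} [Infinite X] (C : Set (Setoid X))
    (hchain : IsChain (· ≤ ·) C) (hwo : C.WellFoundedOn (· < ·)) :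
    Cardinal.mk C ≤ Cardinal.mk X := by
  classical
  have wf : WellFounded (fun a b : C => (a : Setoid X) < (b : Setoid X)) := hwo
  set T : C → Set C := fun P => {Q : C | (P : Setoid X) < (Q : Setoid X)} with hT
  -- choose a witness pair for each non-maximal element
  have exP : ∀ P : C, (T P).Nonempty →
      ∃ p : X × X, (∀ Q : C, (P : Setoid X) < (Q : Setoid X) → (Q : Setoid X) p.1 p.2) ∧
        ¬ (P : Setoid X) p.1 p.2 := by
    intro P hne
    set Q₀ : C := wf.min (T P) hne with hQ₀
    have hmem : Q₀ ∈ T P := wf.min_mem (T P) hne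
    have hlt : (P : Setoid X) < (Q₀ : Setoid X) := hmem
    have hnle : ¬ (Q₀ : Setoid X) ≤ (P : Setoid X) := hlt.not_ge
    rw [Setoid.le_def] at hnle
    push_neg at hnle
    obtain ⟨x, y, hxy, hnxy⟩ := hnle
    refine ⟨(x, y), ?_, hnxy⟩
    intro Q hQ
    have hQmem : Q ∈ T P := hQ
    have hnlt : ¬ (Q : Setoid X) < (Q₀ : Setoid X) := wf.not_lt_min (T P) hQmem
    have hle : (Q₀ : Setoid X) ≤ (Q : Setoid X) := by
      rcases eq_or_ne (Q₀ : Setoid X) (Q : Setoid X) with h | h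
      · exact h.le
      · rcases hchain Q₀.2 Q.2 h with h' | h'
        · exact h'
        · exact absurd (lt_of_le_of_ne h' (Ne.symm h)) hnlt
    exact hle hxy
  choose g hg1 hg2 using exP
  let h : C → Option (X × X) := fun P =>
    if hne : (T P).Nonempty then some (g P hne) else none
  have key : ∀ P P' : C, h P = h P' → (P : Setoid X) < (P' : Setoid X) → False := by
    intro P P' heq hlt
    have hne : (T P).Nonempty := ⟨P', hlt⟩
    by_cases hne' : (T P').Nonempty
    · simp only [h, dif_pos hne, dif_pos hne'] at heq
      have heq' : g P hne = g P' hne' := Option.some_injective _ heq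
      have h1 : (P' : Setoid X) (g P hne).1 (g P hne).2 := hg1 P hne P' hlt
      rw [heq'] at h1
      exact hg2 P' hne' h1
    · simp [h, dif_pos hne, dif_neg hne'] at heq
  have hinj : Function.Injective h := by
    intro P P' heq
    by_contra hne
    have hne1 : (P : Setoid X) ≠ (P' : Setoid X) := fun hc => hne (Subtype.ext hc)
    rcases hchain P.2 P'.2 hne1 with hle | hle
    · exact key P P' heq (lt_of_le_of_ne hle hne1)
    · exact key P' P heq.symm (lt_of_le_of_ne hle hne1.symm)
  calc Cardinal.mk C ≤ Cardinal.mk (Option (X × X)) := Cardinal.mk_le_of_injective hinj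
    _ = Cardinal.mk (X × X) + 1 := Cardinal.mk_option
    _ = Cardinal.mk X * Cardinal.mk X + 1 := by rw [Cardinal.mk_prod, Cardinal.lift_id]
    _ = Cardinal.mk X + 1 := by rw [Cardinal.mul_eq_self (Cardinal.aleph0_le_mk X)]
    _ = Cardinal.mk X := Cardinal.mk_add_one_eq
end

section
/- There exists a three-state example showing that common knowledge of the profile of messages at every state does not imply equality of working partitions: with X = {x,y,z}, f({x}) = f({y}) = a, f({z}) = f({x,y}) = b, P_1 discrete and P_2 = {{x,y},{z}}, the profile of messages is common knowledge at every state but W_1 ≠ W_2. -/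
open scoped Classical in
noncomputable def F15 : Set (Fin 3) → Bool :=
  fun S => if (2:Fin 3) ∈ S ∨ ((0:Fin 3) ∈ S ∧ (1:Fin 3) ∈ S) then true else false

lemma msg_bot15 (x : Fin 3) : msg F15 ⊥ x = F15 {x} := by
  have : blk (⊥ : Setoid (Fin 3)) x = {x} := by
    ext y; simp [blk, show (⇑(⊥:Setoid (Fin 3))) = Eq from rfl, eq_comm]
  simp [msg, this]

lemma msg_ker15 (x : Fin 3) : msg F15 (Setoid.ker (fun y : Fin 3 => y = 2)) x = true := by
  fin_cases x <;>
  · simp only [msg, F15, blk, Setoid.ker, Set.mem_setOf_eq]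
    rw [if_pos]
    simp [Setoid.ker_def, Function.onFun]

/-- A three-state example: with `P₁` discrete and `P₂ = {{0,1},{2}}`,
the profile of messages is common knowledge at every state, but the working
partitions differ. -/
theorem stmt_15 :
    ∃ (f : Set (Fin 3) → Bool) (a b : Bool), a ≠ b ∧
      f {0} = a ∧ f {1} = a ∧ f {2} = b ∧ f {0, 1} = b ∧
      (∀ x, blk ((⊥ : Setoid (Fin 3)) ⊔ Setoid.ker (fun y : Fin 3 => y = 2)) x ⊆
        {x' | msg f (⊥ : Setoid (Fin 3)) x' = msg f (⊥ : Setoid (Fin 3)) x ∧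
              msg f (Setoid.ker (fun y : Fin 3 => y = 2)) x' =
                msg f (Setoid.ker (fun y : Fin 3 => y = 2)) x}) ∧
      wp f (⊥ : Setoid (Fin 3)) ≠ wp f (Setoid.ker (fun y : Fin 3 => y = 2)) := by
  refine ⟨F15, false, true, by decide, by simp [F15], by simp [F15], by simp [F15],
    by simp [F15], ?_, ?_⟩
  · intro x y hy
    rw [bot_sup_eq] at hy
    have h : (x = 2) ↔ (y = 2) := by
      simpa [blk, Setoid.ker, Setoid.ker_def, Function.onFun] using hy
    refine ⟨?_, by rw [msg_ker15, msg_ker15]⟩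
    rw [msg_bot15, msg_bot15]
    fin_cases x <;> fin_cases y <;> simp_all [F15]
  · intro h
    have h2 : (wp F15 (Setoid.ker (fun y : Fin 3 => y = 2))) 0 2 := by
      show msg F15 _ 0 = msg F15 _ 2
      rw [msg_ker15, msg_ker15]
    rw [← h] at h2
    have h1 : msg F15 (⊥ : Setoid (Fin 3)) 0 = msg F15 ⊥ 2 := h2
    rw [msg_bot15, msg_bot15] at h1
    simp [F15] at h1
end
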